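/- Let Γ be a connected graph with graph metric d, and let E be a finite set of edges with vertex set S = ⋃E. For each x ∈ S, the set A_x = {v ∈ Γ⁰ : d(v,x) = d(v,S)} has the property that any two of its elements are joined by a geodesic avoiding all edges of E; consequently if u is an entourage containing u_E = ⋂_{e∈E} u_e, then each A_x is u²-small, and Γ⁰ = ⋃_{x∈S} A_x is a union of |S| many u²-small sets. -/

import Mathlib

open Uniformity

/-- If an edge `s(a,b)` lies on a geodesic walk from `v` to `w`, then the distance splits
across the edge in one of the two orientations. -/
lemma edge_on_geodesic {M : Type*} {Γ : SimpleGraph M} (hconn : Γ.Connected) {a b : M} :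
    ∀ {v w : M} (p : Γ.Walk v w), p.length = Γ.dist v w → s(a, b) ∈ p.edges →
      Γ.dist v a + 1 + Γ.dist b w ≤ Γ.dist v w ∨
      Γ.dist v b + 1 + Γ.dist a w ≤ Γ.dist v w := by
  intro v w p
  induction p with
  | nil => intro _ h; simp at h
  | @cons v' c w' hadj q ih =>
    intro hlen hmem
    have hvc : Γ.dist v' c = 1 := SimpleGraph.dist_eq_one_iff_adj.mpr hadj
    have hqd : q.length = Γ.dist c w' := by
      have h1 : Γ.dist c w' ≤ q.length := SimpleGraph.dist_le q
      have h2 : Γ.dist v' w' ≤ 1 + Γ.dist c w' := by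
        have := hconn.dist_triangle (u := v') (v := c) (w := w')
        omega
      simp only [SimpleGraph.Walk.length_cons] at hlen
      omega
    simp only [SimpleGraph.Walk.edges_cons, List.mem_cons] at hmem
    rcases hmem with heq | hmem
    · rw [Sym2.eq_iff] at heq
      rcases heq with ⟨ha, hb⟩ | ⟨ha, hb⟩
      · left
        subst ha hb
        simp only [SimpleGraph.dist_self, SimpleGraph.Walk.length_cons] at hlen ⊢
        omega
      · right
        subst ha hb
        simp only [SimpleGraph.dist_self, SimpleGraph.Walk.length_cons] at hlen ⊢
        omega
    · have tri_a := hconn.dist_triangle (u := v') (v := c) (w := a)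
      have tri_b := hconn.dist_triangle (u := v') (v := c) (w := b)
      simp only [SimpleGraph.Walk.length_cons] at hlen
      rcases ih hqd hmem with h | h
      · left; omega
      · right; omega

/-- For an edge `{a, b}` of `Γ`, the set of pairs of vertices such that no geodesic joining
them passes through the edge. -/
def visSet {M : Type*} (Γ : SimpleGraph M) (a b : M) : Set (M × M) :=
  {p | Γ.dist p.1 p.2 ≤ min (Γ.dist p.1 a) (Γ.dist p.1 b) + min (Γ.dist p.2 a) (Γ.dist p.2 b)}

/-- The set of endpoints of a finite set of (ordered) edges. -/
def edgeVerts {M : Type*} (E : Finset (M × M)) : Set M :=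
  {x | ∃ e ∈ E, x = e.1 ∨ x = e.2}

/-- Graph distance from a vertex to a set of vertices. -/
noncomputable def distSet {M : Type*} (Γ : SimpleGraph M) (v : M) (S : Set M) : ℕ :=
  sInf ((fun s => Γ.dist v s) '' S)

/-- The set `A_x` of vertices whose distance to the vertex set `S = ⋃E` is realized at `x`. -/
def Ax {M : Type*} (Γ : SimpleGraph M) (E : Finset (M × M)) (x : M) : Set M :=
  {v | Γ.dist v x = distSet Γ v (edgeVerts E)}

/-- Let `E` be a finite nonempty set of edges of a connected graph `Γ` with vertex set
`S = ⋃E`. For each `x ∈ S`, any two elements of `A_x = {v : d(v,x) = d(v,S)}` are joined by a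
geodesic avoiding all edges of `E`; consequently, for any `u ⊇ u_E`, each `A_x` is `u²`-small,
and the vertex set is the union of the `A_x`, `x ∈ S`. -/
theorem geodesic_retraction_cover {M : Type*} (Γ : SimpleGraph M) (hconn : Γ.Connected)
    (E : Finset (M × M)) (hE : ∀ e ∈ E, Γ.Adj e.1 e.2) (hEne : E.Nonempty) :
    (∀ x ∈ edgeVerts E, ∀ v ∈ Ax Γ E x, ∀ w ∈ Ax Γ E x,
      ∃ p : Γ.Walk v w, p.length = Γ.dist v w ∧ ∀ e ∈ E, s(e.1, e.2) ∉ p.edges) ∧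
    (∀ u : Set (M × M), (⋂ e ∈ E, visSet Γ e.1 e.2) ⊆ u →
      ∀ x ∈ edgeVerts E, ∀ v ∈ Ax Γ E x, ∀ w ∈ Ax Γ E x, v = w ∨ (v, w) ∈ SetRel.comp u u) ∧
    (⋃ x ∈ edgeVerts E, Ax Γ E x) = Set.univ := by
  have hsle : ∀ (v : M), ∀ y ∈ edgeVerts E, distSet Γ v (edgeVerts E) ≤ Γ.dist v y := by
    intro v y hy
    exact Nat.sInf_le ⟨y, hy, rfl⟩
  have hmemEV : ∀ e ∈ E, e.1 ∈ edgeVerts E ∧ e.2 ∈ edgeVerts E := by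
    intro e he
    exact ⟨⟨e, he, Or.inl rfl⟩, ⟨e, he, Or.inr rfl⟩⟩
  refine ⟨?_, ?_, ?_⟩
  · intro x hx v hv w hw
    obtain ⟨p, hp⟩ := hconn.exists_walk_length_eq_dist v w
    refine ⟨p, hp, ?_⟩
    intro e he hmem
    obtain ⟨ha, hb⟩ := hmemEV e he
    have h1 : Γ.dist v x ≤ Γ.dist v e.1 := hv ▸ hsle v e.1 ha
    have h2 : Γ.dist v x ≤ Γ.dist v e.2 := hv ▸ hsle v e.2 hb
    have h3 : Γ.dist w x ≤ Γ.dist w e.1 := hw ▸ hsle w e.1 ha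
    have h4 : Γ.dist w x ≤ Γ.dist w e.2 := hw ▸ hsle w e.2 hb
    have htri : Γ.dist v w ≤ Γ.dist v x + Γ.dist x w := hconn.dist_triangle
    have hc1 : Γ.dist x w = Γ.dist w x := SimpleGraph.dist_comm
    have hc2 : Γ.dist e.1 w = Γ.dist w e.1 := SimpleGraph.dist_comm
    have hc3 : Γ.dist e.2 w = Γ.dist w e.2 := SimpleGraph.dist_comm
    rcases edge_on_geodesic hconn p hp hmem with h | h <;> omega
  · intro u hu x hx v hv w hw
    right
    have key : ∀ z, z ∈ Ax Γ E x → (z, x) ∈ ⋂ e ∈ E, visSet Γ e.1 e.2 := by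
      intro z hz
      simp only [Set.mem_iInter]
      intro e he
      obtain ⟨ha, hb⟩ := hmemEV e he
      have h1 : Γ.dist z x ≤ Γ.dist z e.1 := hz ▸ hsle z e.1 ha
      have h2 : Γ.dist z x ≤ Γ.dist z e.2 := hz ▸ hsle z e.2 hb
      simp only [visSet, Set.mem_setOf_eq]
      omega
    have key2 : (x, w) ∈ ⋂ e ∈ E, visSet Γ e.1 e.2 := by
      simp only [Set.mem_iInter]
      intro e he
      obtain ⟨ha, hb⟩ := hmemEV e he
      have h3 : Γ.dist w x ≤ Γ.dist w e.1 := hw ▸ hsle w e.1 ha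
      have h4 : Γ.dist w x ≤ Γ.dist w e.2 := hw ▸ hsle w e.2 hb
      have hc : Γ.dist x w = Γ.dist w x := SimpleGraph.dist_comm
      simp only [visSet, Set.mem_setOf_eq]
      omega
    exact ⟨x, hu (key v hv), hu key2⟩
  · ext v
    simp only [Set.mem_iUnion, Set.mem_univ, iff_true]
    obtain ⟨e, he⟩ := hEne
    have hne : ((fun s => Γ.dist v s) '' edgeVerts E).Nonempty :=
      ⟨Γ.dist v e.1, e.1, (hmemEV e he).1, rfl⟩
    obtain ⟨y, hy, hdy⟩ := Nat.sInf_mem hne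
    exact ⟨y, hy, hdy⟩
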